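/- arXiv:1903.02491 — 2 statements merged into one kernel-verified Lean document; each statement's English description precedes it below -/
import Mathlib

section
/- Let H be a (possibly noncommutative) ring, K a commutative ring, and τ : H → K an additive map satisfying τ(rr') = τ(r'r) for all r, r' ∈ H. Let a_{ij} ∈ K and h_{ij} ∈ H be given for every edge (i,j) ∈ E. Then det_τ Δ_[m] = Σ_{F ∈ ℱ→_m} a_F · ∏_{c ∈ 𝒞(F)} (1 − τ(h_c)), where the left-hand side is the cycle expansion det_τ Δ_[m] := Σ_{σ ∈ S_m} ε(σ) · ∏_{i fixed by σ} (Σ_{j ≠ i} a_{ij}) · ∏_{nontrivial cycles (i₁…i_r) of σ} (−1)^r a_{i₁i₂}⋯a_{i_ri₁} τ(h_{i₁i₂}⋯h_{i_ri₁}). (Centrality of τ makes each factor τ(h_{i₁i₂}⋯h_{i_ri₁}) independent of the chosen starting point of the cycle.) -/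
/-!
Theorem 3.1 (matrix-tree theorem with holonomies in a ring, à la Zeilberger).
-/

open Finset Function

section Defs

variable {V : Type*} [Fintype V] [DecidableEq V]
variable {H : Type*} [Ring H] {K : Type*} [CommRing K]

/-- Ordered product of the edge values along the path `x, g x, g^[2] x, …, g^[r] x`. -/
def pathProd (h : V → V → H) (g : V → V) (x : V) (r : ℕ) : H :=
  ((List.range r).map fun t => h (g^[t] x) (g^[t + 1] x)).prod

/-- `x` is the canonical (`enc`-minimal) point on a nontrivial cycle of `g`. -/
def IsCycleRep (enc : V → ℕ) (g : V → V) (x : V) : Prop :=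
  2 ≤ minimalPeriod g x ∧ ∀ t : ℕ, enc x ≤ enc (g^[t] x)

/-- The canonical representatives of the (nontrivial) cycles of `g`. -/
noncomputable def cycleReps (enc : V → ℕ) (g : V → V) : Finset V :=
  @Finset.filter V (IsCycleRep enc g) (Classical.decPred _) Finset.univ

/-- The cycle expansion `det_τ Δ`: the sum over permutations `σ` of `ε(σ)` times the
product over fixed points of the diagonal entries `diag` times the product over nontrivial
cycles of `(-1)^r · (product of the `aa`-weights along the cycle) · τ(ordered product of the
`hh`-holonomies along the cycle)`. -/
noncomputable def detExp (τ : H → K) (enc : V → ℕ) (diag : V → K)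
    (aa : V → V → K) (hh : V → V → H) : K :=
  ∑ σ : Equiv.Perm V,
    ((Equiv.Perm.sign σ : ℤ) : K) *
      (∏ x ∈ Finset.univ.filter fun x => σ x = x, diag x) *
      ∏ x ∈ cycleReps enc ⇑σ,
        (-1 : K) ^ minimalPeriod (⇑σ) x *
          (∏ t ∈ Finset.range (minimalPeriod (⇑σ) x), aa ((⇑σ)^[t] x) ((⇑σ)^[t + 1] x)) *
          τ (pathProd hh (⇑σ) x (minimalPeriod (⇑σ) x))

end Defs

set_option linter.unusedSectionVars false

section Tool
variable {α : Type*} [Fintype α] [DecidableEq α]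

lemma per_iter {g : α → α} {x : α} (hx : x ∈ periodicPts g) (t : ℕ) :
    g^[t] x ∈ periodicPts g := by
  obtain ⟨p, hp, hpx⟩ := hx
  exact ⟨p, hp, by
    unfold IsPeriodicPt IsFixedPt
    rw [← Function.iterate_add_apply, Nat.add_comm, Function.iterate_add_apply, hpx]⟩

lemma minPer_iter {g : α → α} {x : α} (hx : x ∈ periodicPts g) (t : ℕ) :
    minimalPeriod g (g^[t] x) = minimalPeriod g x := by
  induction t with
  | zero => rfl
  | succ t ih =>
      rw [Function.iterate_succ_apply', Function.minimalPeriod_apply (per_iter hx t), ih]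

lemma orbit_symm {g : α → α} {x : α} (hx : x ∈ periodicPts g) (t : ℕ) :
    ∃ s, g^[s] (g^[t] x) = x := by
  refine ⟨t * (minimalPeriod g x - 1), ?_⟩
  rw [← Function.iterate_add_apply]
  have hp : 0 < minimalPeriod g x := Function.minimalPeriod_pos_iff_mem_periodicPts.2 hx
  obtain ⟨k, hk⟩ : ∃ k, minimalPeriod g x = k + 1 := ⟨_, (Nat.succ_pred_eq_of_pos hp).symm⟩
  have h1 : t * (minimalPeriod g x - 1) + t = t * minimalPeriod g x := by rw [hk, Nat.add_sub_cancel]; ring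
  rw [h1]
  exact (Function.isPeriodicPt_minimalPeriod g x).const_mul t

noncomputable def orbitF (g : α → α) (x : α) : Finset α :=
  (Finset.range (minimalPeriod g x)).image (g^[·] x)

lemma mem_orbitF_iff {g : α → α} {x y : α} (hx : x ∈ periodicPts g) :
    y ∈ orbitF g x ↔ ∃ t, g^[t] x = y := by
  constructor
  · rintro h; simp only [orbitF, Finset.mem_image, Finset.mem_range] at h
    obtain ⟨t, _, ht⟩ := h; exact ⟨t, ht⟩
  · rintro ⟨t, ht⟩
    have hp : 0 < minimalPeriod g x := Function.minimalPeriod_pos_iff_mem_periodicPts.2 hx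
    simp only [orbitF, Finset.mem_image, Finset.mem_range]
    exact ⟨t % minimalPeriod g x, Nat.mod_lt _ hp,
      by rw [Function.iterate_mod_minimalPeriod_eq]; exact ht⟩

lemma card_orbitF (g : α → α) (x : α) : (orbitF g x).card = minimalPeriod g x := by
  rw [orbitF, Finset.card_image_of_injOn, Finset.card_range]
  intro s hs t ht hst
  exact Function.iterate_injOn_Iio_minimalPeriod
    (by simpa using hs : s ∈ Set.Iio _) (by simpa using ht) hst

variable {enc : α → ℕ} (henc : Function.Injective enc)

lemma mem_cycleReps_iff {g : α → α} {x : α} :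
    x ∈ cycleReps enc g ↔ 2 ≤ minimalPeriod g x ∧ ∀ t : ℕ, enc x ≤ enc (g^[t] x) := by
  simp [cycleReps, IsCycleRep, Finset.mem_filter]

lemma rep_periodic {g : α → α} {x : α} (h : x ∈ cycleReps enc g) : x ∈ periodicPts g :=
  Function.minimalPeriod_pos_iff_mem_periodicPts.1
    (by have := (mem_cycleReps_iff.1 h).1; omega)

lemma exists_rep {g : α → α} {x : α} (hx : x ∈ periodicPts g)
    (h2 : 2 ≤ minimalPeriod g x) :
    ∃ r ∈ cycleReps enc g, (∃ t, g^[t] x = r) ∧ ∃ s, g^[s] r = x := by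
  have hx0 : x ∈ orbitF g x := (mem_orbitF_iff hx).2 ⟨0, rfl⟩
  obtain ⟨r, hrmem, hrmin⟩ := Finset.exists_min_image (orbitF g x) enc ⟨x, hx0⟩
  obtain ⟨t, ht⟩ := (mem_orbitF_iff hx).1 hrmem
  have hrper : r ∈ periodicPts g := ht ▸ per_iter hx t
  have hrp : minimalPeriod g r = minimalPeriod g x := ht ▸ minPer_iter hx t
  refine ⟨r, mem_cycleReps_iff.2 ⟨hrp ▸ h2, fun u => ?_⟩, ⟨t, ht⟩, ?_⟩
  · refine hrmin _ ((mem_orbitF_iff hx).2 ⟨u + t, ?_⟩)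
    rw [Function.iterate_add_apply, ht]
  · rcases orbit_symm hx t with ⟨s, hs⟩
    exact ⟨s, by rw [ht] at hs; exact hs⟩

include henc in
lemma rep_unique {g : α → α} {r r' : α} (hr : r ∈ cycleReps enc g)
    (hr' : r' ∈ cycleReps enc g) (hor : ∃ t, g^[t] r = r') : r = r' := by
  obtain ⟨t, ht⟩ := hor
  have h1 : enc r ≤ enc r' := ht ▸ (mem_cycleReps_iff.1 hr).2 t
  obtain ⟨s, hs⟩ := orbit_symm (rep_periodic hr) t
  rw [ht] at hs
  have h2 : enc r' ≤ enc r := hs ▸ (mem_cycleReps_iff.1 hr').2 s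
  exact henc (le_antisymm h1 h2)

include henc in
lemma reps_pairwiseDisjoint (g : α → α) :
    (↑(cycleReps enc g) : Set α).PairwiseDisjoint (orbitF g) := by
  intro r hr r' hr' hne
  rw [Finset.mem_coe] at hr hr'
  rw [Function.onFun, Finset.disjoint_left]
  intro z hz hz'
  obtain ⟨t, ht⟩ := (mem_orbitF_iff (rep_periodic hr)).1 hz
  obtain ⟨t', ht'⟩ := (mem_orbitF_iff (rep_periodic hr')).1 hz'
  obtain ⟨s, hs⟩ := orbit_symm (rep_periodic hr') t'
  rw [ht'] at hs
  refine hne (rep_unique henc hr hr' ⟨s + t, ?_⟩)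
  rw [Function.iterate_add_apply, ht, hs]

end Tool

section Tool2
variable {α : Type*}

lemma not_fixed_of_two_le {g : α → α} {z : α} (h2 : 2 ≤ minimalPeriod g z) : g z ≠ z := by
  intro h
  have : minimalPeriod g z ≤ 1 := Function.IsPeriodicPt.minimalPeriod_le one_pos
    (by show g^[1] z = z; rwa [Function.iterate_one])
  omega

lemma periodic_inj {g : α → α} {z z' : α} (hz : z ∈ periodicPts g)
    (hz' : z' ∈ periodicPts g) (h : g z = g z') : z = z' := by
  have hp : 0 < minimalPeriod g z := Function.minimalPeriod_pos_iff_mem_periodicPts.2 hz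
  have hp' : 0 < minimalPeriod g z' := Function.minimalPeriod_pos_iff_mem_periodicPts.2 hz'
  have hz1 : z = g^[minimalPeriod g z - 1] (g z) := by
    conv_lhs => rw [← Function.iterate_minimalPeriod (f := g) (x := z)]
    rw [← Function.iterate_succ_apply]
    congr 1
    omega
  have hz1' : z' = g^[minimalPeriod g z' - 1] (g z') := by
    conv_lhs => rw [← Function.iterate_minimalPeriod (f := g) (x := z')]
    rw [← Function.iterate_succ_apply]
    congr 1
    omega
  have hper : minimalPeriod g z = minimalPeriod g z' := by
    have e1 : minimalPeriod g (g z) = minimalPeriod g z := Function.minimalPeriod_apply hz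
    have e2 : minimalPeriod g (g z') = minimalPeriod g z' := Function.minimalPeriod_apply hz'
    rw [← e1, ← e2, h]
  rw [hz1, hz1', h, hper]

end Tool2

section PermTool
open Finset Function Equiv
variable {α : Type*} [Fintype α] [DecidableEq α] {enc : α → ℕ} (henc : Function.Injective enc)

lemma perm_periodic (σ : Equiv.Perm α) (x : α) : x ∈ periodicPts ⇑σ :=
  ⟨orderOf σ, orderOf_pos σ, by
    show (⇑σ)^[orderOf σ] x = x
    rw [Equiv.Perm.iterate_eq_pow, pow_orderOf_eq_one]; rfl⟩

lemma two_le_minPer {σ : Equiv.Perm α} {x : α} (hx : σ x ≠ x) :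
    2 ≤ minimalPeriod ⇑σ x := by
  have h0 : 0 < minimalPeriod ⇑σ x :=
    Function.minimalPeriod_pos_iff_mem_periodicPts.2 (perm_periodic σ x)
  by_contra h
  push_neg at h
  have h1 : minimalPeriod ⇑σ x = 1 := by omega
  apply hx
  have h2 := Function.iterate_minimalPeriod (f := ⇑σ) (x := x)
  rwa [h1, Function.iterate_one] at h2

lemma supp_iter {σ : Equiv.Perm α} {x : α} (hx : σ x ≠ x) (t : ℕ) :
    σ ((⇑σ)^[t] x) ≠ (⇑σ)^[t] x := by
  induction t with
  | zero => exact hx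
  | succ t ih =>
      rw [Function.iterate_succ_apply']
      intro h
      exact ih (σ.injective h)

lemma rep_not_fixed {σ : Equiv.Perm α} {x : α} (hx : x ∈ cycleReps enc ⇑σ) : σ x ≠ x := by
  intro h
  have h2 := (mem_cycleReps_iff.1 hx).1
  have : minimalPeriod ⇑σ x ≤ 1 := Function.IsPeriodicPt.minimalPeriod_le one_pos
    (by show (⇑σ)^[1] x = x; rwa [Function.iterate_one])
  omega

include henc in
lemma supp_eq_biUnion (σ : Equiv.Perm α) :
    Finset.univ.filter (fun x => ¬ σ x = x) = (cycleReps enc ⇑σ).biUnion (orbitF ⇑σ) := by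
  ext i
  simp only [Finset.mem_filter, Finset.mem_univ, true_and, Finset.mem_biUnion]
  constructor
  · intro hi
    obtain ⟨r, hr, ⟨t, ht⟩, _⟩ := exists_rep (enc := enc) (perm_periodic σ i) (two_le_minPer hi)
    obtain ⟨s, hs⟩ := orbit_symm (perm_periodic σ i) t
    rw [ht] at hs
    exact ⟨r, hr, (mem_orbitF_iff (rep_periodic hr)).2 ⟨s, hs⟩⟩
  · rintro ⟨r, hr, hi⟩
    obtain ⟨t, ht⟩ := (mem_orbitF_iff (rep_periodic hr)).1 hi
    rw [← ht]
    exact supp_iter (rep_not_fixed hr) t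

include henc in
lemma prod_supp {M : Type*} [CommMonoid M] (σ : Equiv.Perm α) (F : α → M) :
    ∏ x ∈ Finset.univ.filter (fun x => ¬ σ x = x), F x =
      ∏ r ∈ cycleReps enc ⇑σ, ∏ t ∈ Finset.range (minimalPeriod ⇑σ r), F ((⇑σ)^[t] r) := by
  rw [supp_eq_biUnion henc σ, Finset.prod_biUnion (reps_pairwiseDisjoint henc ⇑σ)]
  refine Finset.prod_congr rfl fun r hr => ?_
  rw [orbitF, Finset.prod_image]
  intro s hs t ht hst
  exact Function.iterate_injOn_Iio_minimalPeriod
    (by simpa using hs : s ∈ Set.Iio _) (by simpa using ht) hst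

include henc in
lemma card_supp (σ : Equiv.Perm α) :
    (Finset.univ.filter (fun x => ¬ σ x = x)).card =
      ∑ r ∈ cycleReps enc ⇑σ, minimalPeriod ⇑σ r := by
  rw [supp_eq_biUnion henc σ, Finset.card_biUnion]
  · exact Finset.sum_congr rfl fun r _ => card_orbitF ⇑σ r
  · intro r hr r' hr' hne
    exact reps_pairwiseDisjoint henc ⇑σ (Finset.mem_coe.2 hr) (Finset.mem_coe.2 hr') hne

lemma sameCycle_of_iterate {σ : Equiv.Perm α} {x y : α} (h : ∃ t, (⇑σ)^[t] x = y) :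
    σ.SameCycle x y := by
  obtain ⟨t, ht⟩ := h
  exact ⟨(t : ℤ), by rw [zpow_natCast, ← Equiv.Perm.iterate_eq_pow]; exact ht⟩

lemma iterate_of_sameCycle {σ : Equiv.Perm α} {x y : α} (h : σ.SameCycle x y) :
    ∃ t, (⇑σ)^[t] x = y := by
  obtain ⟨i, _, _, hi⟩ := Equiv.Perm.SameCycle.exists_pow_eq σ h
  exact ⟨i, by rw [Equiv.Perm.iterate_eq_pow]; exact hi⟩

include henc in
lemma card_reps_eq (σ : Equiv.Perm α) :
    (cycleReps enc ⇑σ).card = Multiset.card σ.cycleType := by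
  have hct : Multiset.card σ.cycleType = σ.cycleFactorsFinset.card := by
    rw [Equiv.Perm.cycleType, Multiset.card_map]; rfl
  rw [hct]
  refine Finset.card_bij (fun x _ => σ.cycleOf x) ?_ ?_ ?_
  · intro x hx
    exact Equiv.Perm.cycleOf_mem_cycleFactorsFinset_iff.2
      (Equiv.Perm.mem_support.2 (rep_not_fixed hx))
  · intro x hx y hy hxy
    have hxy' : σ.cycleOf x = σ.cycleOf y := hxy
    have hysupp : y ∈ σ.support := Equiv.Perm.mem_support.2 (rep_not_fixed hy)
    have : y ∈ (σ.cycleOf x).support := by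
      rw [hxy', Equiv.Perm.mem_support_cycleOf_iff]
      exact ⟨Equiv.Perm.SameCycle.refl _ _, hysupp⟩
    have hsc : σ.SameCycle x y := (Equiv.Perm.mem_support_cycleOf_iff.1 this).1
    exact rep_unique henc hx hy (iterate_of_sameCycle hsc)
  · intro c hc
    obtain ⟨a, hca, -⟩ := (Equiv.Perm.mem_cycleFactorsFinset_iff.1 hc).1
    have hasupp : a ∈ c.support := Equiv.Perm.mem_support.2 hca
    have hceq : c = σ.cycleOf a := Equiv.Perm.cycle_is_cycleOf hasupp hc
    have hσa : σ a ≠ a := by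
      have hca' := (Equiv.Perm.mem_cycleFactorsFinset_iff.1 hc).2 a hasupp
      rw [← hca']; exact hca
    obtain ⟨r, hr, ⟨t, ht⟩, hs⟩ :=
      exists_rep (enc := enc) (perm_periodic σ a) (two_le_minPer hσa)
    refine ⟨r, hr, ?_⟩
    show σ.cycleOf r = c
    rw [hceq]
    exact Equiv.Perm.SameCycle.cycleOf_eq (sameCycle_of_iterate hs)

include henc in
lemma sign_cast {K : Type*} [CommRing K] (σ : Equiv.Perm α) :
    ((Equiv.Perm.sign σ : ℤ) : K) =
      (-1 : K) ^ ((Finset.univ.filter (fun x => ¬ σ x = x)).card + (cycleReps enc ⇑σ).card) := by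
  have hsupp : σ.support = Finset.univ.filter (fun x => ¬ σ x = x) := by
    ext x; simp [Equiv.Perm.mem_support]
  rw [Equiv.Perm.sign_of_cycleType, Equiv.Perm.sum_cycleType, ← card_reps_eq henc, hsupp]
  push_cast
  ring

end PermTool


/-- Extension of `f : U → V` to all of `V = {1,…,n}`, fixing the well pointwise. -/
def extFun {n m : ℕ} (hmn : m ≤ n) (f : Fin m → Fin n) : Fin n → Fin n :=
  fun j => if h : (j : ℕ) < m then f ⟨(j : ℕ), h⟩ else j


section Main
open Finset Function
variable {n m : ℕ} (hmn : m ≤ n)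

lemma extFun_castLE (f : Fin m → Fin n) (i : Fin m) :
    extFun hmn f (Fin.castLE hmn i) = f i := by
  have h : ((Fin.castLE hmn i : Fin n) : ℕ) < m := i.isLt
  rw [extFun, dif_pos h]
  congr 1

lemma extFun_ge (f : Fin m → Fin n) {z : Fin n} (h : ¬ (z : ℕ) < m) :
    extFun hmn f z = z := by rw [extFun, dif_neg h]

lemma moved_lt (f : Fin m → Fin n) {z : Fin n} (h : extFun hmn f z ≠ z) : (z : ℕ) < m := by
  by_contra hz
  exact h (extFun_ge hmn f hz)

/-- `σ` is a sub-permutation of `f`: on its support it agrees with `f`, and `f` avoids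
the diagonal on fixed points. -/
def Compat (σ : Equiv.Perm (Fin m)) (f : Fin m → Fin n) : Prop :=
  ∀ i, (σ i = i → f i ≠ Fin.castLE hmn i) ∧ (σ i ≠ i → f i = Fin.castLE hmn (σ i))

lemma compat_hf {σ : Equiv.Perm (Fin m)} {f : Fin m → Fin n} (hc : Compat hmn σ f) :
    ∀ i, f i ≠ Fin.castLE hmn i := by
  intro i
  by_cases h : σ i = i
  · exact (hc i).1 h
  · rw [(hc i).2 h]
    intro hh
    exact h (Fin.castLE_injective hmn hh)

lemma compat_apply {σ : Equiv.Perm (Fin m)} {f : Fin m → Fin n} (hc : Compat hmn σ f)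
    {i : Fin m} (hi : σ i ≠ i) :
    extFun hmn f (Fin.castLE hmn i) = Fin.castLE hmn (σ i) := by
  rw [extFun_castLE]; exact (hc i).2 hi

lemma compat_iterate {σ : Equiv.Perm (Fin m)} {f : Fin m → Fin n} (hc : Compat hmn σ f)
    {i : Fin m} (hi : σ i ≠ i) (t : ℕ) :
    (extFun hmn f)^[t] (Fin.castLE hmn i) = Fin.castLE hmn ((⇑σ)^[t] i) := by
  induction t with
  | zero => rfl
  | succ t ih =>
      rw [Function.iterate_succ_apply', Function.iterate_succ_apply', ih]
      exact compat_apply hmn hc (supp_iter hi t)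

lemma compat_minPer {σ : Equiv.Perm (Fin m)} {f : Fin m → Fin n} (hc : Compat hmn σ f)
    {i : Fin m} (hi : σ i ≠ i) :
    minimalPeriod (extFun hmn f) (Fin.castLE hmn i) = minimalPeriod ⇑σ i := by
  have hper : i ∈ periodicPts ⇑σ := perm_periodic σ i
  have hpos : 0 < minimalPeriod ⇑σ i := Function.minimalPeriod_pos_iff_mem_periodicPts.2 hper
  have h1 : IsPeriodicPt (extFun hmn f) (minimalPeriod ⇑σ i) (Fin.castLE hmn i) := by
    show (extFun hmn f)^[minimalPeriod ⇑σ i] (Fin.castLE hmn i) = Fin.castLE hmn i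
    rw [compat_iterate hmn hc hi, Function.iterate_minimalPeriod]
  have hle : minimalPeriod (extFun hmn f) (Fin.castLE hmn i) ≤ minimalPeriod ⇑σ i :=
    h1.minimalPeriod_le hpos
  have hpos2 : 0 < minimalPeriod (extFun hmn f) (Fin.castLE hmn i) :=
    Function.minimalPeriod_pos_iff_mem_periodicPts.2 ⟨_, hpos, h1⟩
  have h2 : IsPeriodicPt ⇑σ (minimalPeriod (extFun hmn f) (Fin.castLE hmn i)) i := by
    show (⇑σ)^[_] i = i
    apply Fin.castLE_injective hmn
    rw [← compat_iterate hmn hc hi, Function.iterate_minimalPeriod]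
  exact le_antisymm hle (h2.minimalPeriod_le hpos2)

lemma compat_rep {σ : Equiv.Perm (Fin m)} {f : Fin m → Fin n} (hc : Compat hmn σ f)
    {x : Fin m} (hx : x ∈ cycleReps Fin.val ⇑σ) :
    Fin.castLE hmn x ∈ cycleReps Fin.val (extFun hmn f) := by
  have hsx : σ x ≠ x := rep_not_fixed hx
  obtain ⟨h2, hmin⟩ := mem_cycleReps_iff.1 hx
  refine mem_cycleReps_iff.2 ⟨?_, fun t => ?_⟩
  · rw [compat_minPer hmn hc hsx]; exact h2
  · rw [compat_iterate hmn hc hsx]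
    simpa using hmin t

lemma compat_pathProd {Hr : Type*} [Ring Hr] (h : Fin n → Fin n → Hr)
    {σ : Equiv.Perm (Fin m)} {f : Fin m → Fin n} (hc : Compat hmn σ f)
    {x : Fin m} (hx : σ x ≠ x) (r : ℕ) :
    pathProd (fun x y => h (Fin.castLE hmn x) (Fin.castLE hmn y)) ⇑σ x r =
      pathProd h (extFun hmn f) (Fin.castLE hmn x) r := by
  unfold pathProd
  congr 1
  apply List.map_congr_left
  intro t _
  rw [compat_iterate hmn hc hx, compat_iterate hmn hc hx]

/-- the "moved" predicate: lies on a cycle through `S`. -/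
def movp (g : Fin n → Fin n) (S : Finset (Fin n)) (z : Fin n) : Prop :=
  ∃ y ∈ S, ∃ t, g^[t] y = z

variable {f : Fin m → Fin n} {S : Finset (Fin n)}

lemma movp_periodic (hS : S ⊆ cycleReps Fin.val (extFun hmn f)) {z : Fin n}
    (h : movp (extFun hmn f) S z) :
    z ∈ periodicPts (extFun hmn f) ∧ 2 ≤ minimalPeriod (extFun hmn f) z := by
  obtain ⟨y, hy, t, ht⟩ := h
  have hyrep := hS hy
  have hyper := rep_periodic hyrep
  have h2 := (mem_cycleReps_iff.1 hyrep).1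
  subst ht
  exact ⟨per_iter hyper t, by rw [minPer_iter hyper t]; exact h2⟩

lemma movp_val_lt (hS : S ⊆ cycleReps Fin.val (extFun hmn f)) {z : Fin n}
    (h : movp (extFun hmn f) S z) : (z : ℕ) < m :=
  moved_lt hmn f (not_fixed_of_two_le (movp_periodic hmn hS h).2)

lemma movp_next {g : Fin n → Fin n} {z : Fin n} (h : movp g S z) : movp g S (g z) := by
  obtain ⟨y, hy, t, ht⟩ := h
  exact ⟨y, hy, t + 1, by rw [Function.iterate_succ_apply', ht]⟩

lemma movp_flt (hS : S ⊆ cycleReps Fin.val (extFun hmn f)) {i : Fin m}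
    (h : movp (extFun hmn f) S (Fin.castLE hmn i)) : ((f i : Fin n) : ℕ) < m := by
  have := movp_next h
  rw [extFun_castLE] at this
  exact movp_val_lt hmn hS this

open Classical in
/-- the underlying function of the sub-permutation attached to a set `S` of cycles of `f`. -/
noncomputable def permFun (hmn : m ≤ n) (f : Fin m → Fin n) (S : Finset (Fin n)) :
    Fin m → Fin m :=
  fun i => if h : movp (extFun hmn f) S (Fin.castLE hmn i) ∧ ((f i : Fin n) : ℕ) < m
    then ⟨((f i : Fin n) : ℕ), h.2⟩ else i

lemma permFun_movp (hS : S ⊆ cycleReps Fin.val (extFun hmn f)) {i : Fin m}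
    (h : movp (extFun hmn f) S (Fin.castLE hmn i)) :
    Fin.castLE hmn (permFun hmn f S i) = f i := by
  rw [permFun, dif_pos ⟨h, movp_flt hmn hS h⟩]
  exact Fin.ext (by simp)

lemma permFun_not_movp {i : Fin m} (h : ¬ movp (extFun hmn f) S (Fin.castLE hmn i)) :
    permFun hmn f S i = i := by
  rw [permFun, dif_neg (fun hh => h hh.1)]

lemma permFun_inj (hS : S ⊆ cycleReps Fin.val (extFun hmn f))
    (hf : ∀ i, f i ≠ Fin.castLE hmn i) : Function.Injective (permFun hmn f S) := by
  intro i j hij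
  by_cases hi : movp (extFun hmn f) S (Fin.castLE hmn i) <;>
    by_cases hj : movp (extFun hmn f) S (Fin.castLE hmn j)
  · -- both moved
    have h1 := permFun_movp hmn hS hi
    have h2 := permFun_movp hmn hS hj
    rw [hij] at h1
    have hfifj : f i = f j := by rw [← h1, ← h2]
    have hgi : extFun hmn f (Fin.castLE hmn i) = extFun hmn f (Fin.castLE hmn j) := by
      rw [extFun_castLE, extFun_castLE]; exact hfifj
    exact Fin.castLE_injective hmn
      (periodic_inj (movp_periodic hmn hS hi).1 (movp_periodic hmn hS hj).1 hgi)
  · -- i moved, j not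
    exfalso
    rw [permFun_not_movp hmn hj] at hij
    have h1 := permFun_movp hmn hS hi
    rw [hij] at h1
    apply hj
    have := movp_next hi
    rw [extFun_castLE, ← h1] at this
    exact this
  · exfalso
    rw [permFun_not_movp hmn hi] at hij
    have h1 := permFun_movp hmn hS hj
    rw [← hij] at h1
    apply hi
    have := movp_next hj
    rw [extFun_castLE, ← h1] at this
    exact this
  · rw [permFun_not_movp hmn hi, permFun_not_movp hmn hj] at hij
    exact hij

noncomputable def permOf (hmn : m ≤ n) (f : Fin m → Fin n) (S : Finset (Fin n)) :
    Equiv.Perm (Fin m) :=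
  if h : Function.Bijective (permFun hmn f S) then Equiv.ofBijective _ h else 1

lemma permOf_coe (hS : S ⊆ cycleReps Fin.val (extFun hmn f))
    (hf : ∀ i, f i ≠ Fin.castLE hmn i) : ⇑(permOf hmn f S) = permFun hmn f S := by
  rw [permOf, dif_pos (Finite.injective_iff_bijective.1 (permFun_inj hmn hS hf))]
  rfl

lemma permOf_supp_iff (hS : S ⊆ cycleReps Fin.val (extFun hmn f))
    (hf : ∀ i, f i ≠ Fin.castLE hmn i) (i : Fin m) :
    permOf hmn f S i ≠ i ↔ movp (extFun hmn f) S (Fin.castLE hmn i) := by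
  rw [permOf_coe hmn hS hf]
  constructor
  · intro h
    by_contra hm
    exact h (permFun_not_movp hmn hm)
  · intro h hi
    apply hf i
    rw [← permFun_movp hmn hS h, hi]

lemma permOf_compat (hS : S ⊆ cycleReps Fin.val (extFun hmn f))
    (hf : ∀ i, f i ≠ Fin.castLE hmn i) : Compat hmn (permOf hmn f S) f := by
  intro i
  constructor
  · intro _; exact hf i
  · intro h
    have hm := (permOf_supp_iff hmn hS hf i).1 h
    rw [permOf_coe hmn hS hf, permFun_movp hmn hS hm]

end Main


section Inv
open Finset Function
variable {n m : ℕ} (hmn : m ≤ n) {f : Fin m → Fin n} {S : Finset (Fin n)}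

lemma compat_S_subset {σ : Equiv.Perm (Fin m)} (hc : Compat hmn σ f) :
    (cycleReps Fin.val ⇑σ).image (Fin.castLE hmn) ⊆ cycleReps Fin.val (extFun hmn f) := by
  intro y hy
  obtain ⟨x, hx, rfl⟩ := Finset.mem_image.1 hy
  exact compat_rep hmn hc hx

lemma right_inv (hS : S ⊆ cycleReps Fin.val (extFun hmn f))
    (hf : ∀ i, f i ≠ Fin.castLE hmn i) :
    (cycleReps Fin.val ⇑(permOf hmn f S)).image (Fin.castLE hmn) = S := by
  have hc : Compat hmn (permOf hmn f S) f := permOf_compat hmn hS hf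
  ext y
  constructor
  · intro hy
    obtain ⟨x, hx, rfl⟩ := Finset.mem_image.1 hy
    have hex : Fin.castLE hmn x ∈ cycleReps Fin.val (extFun hmn f) := compat_rep hmn hc hx
    have hmov : movp (extFun hmn f) S (Fin.castLE hmn x) :=
      (permOf_supp_iff hmn hS hf x).1 (rep_not_fixed hx)
    obtain ⟨y', hy', t, ht⟩ := hmov
    have : y' = Fin.castLE hmn x := rep_unique Fin.val_injective (hS hy') hex ⟨t, ht⟩
    rwa [← this]
  · intro hy
    have hyrep := hS hy
    have h2 := (mem_cycleReps_iff.1 hyrep).1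
    have hlt : (y : ℕ) < m := moved_lt hmn f (not_fixed_of_two_le h2)
    set x : Fin m := ⟨(y : ℕ), hlt⟩ with hxdef
    have hex : Fin.castLE hmn x = y := Fin.ext (by simp [hxdef])
    have hmov : movp (extFun hmn f) S (Fin.castLE hmn x) := ⟨y, hy, 0, by rw [hex]; rfl⟩
    have hsx : permOf hmn f S x ≠ x := (permOf_supp_iff hmn hS hf x).2 hmov
    refine Finset.mem_image.2 ⟨x, ?_, hex⟩
    refine mem_cycleReps_iff.2 ⟨?_, fun t => ?_⟩
    · rw [← compat_minPer hmn hc hsx, hex]; exact h2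
    · have hit := compat_iterate hmn hc hsx t
      have hv : ((⇑(permOf hmn f S))^[t] x : ℕ) =
          ((extFun hmn f)^[t] (Fin.castLE hmn x) : ℕ) := by rw [hit]; simp
      rw [hv, hex]
      have := (mem_cycleReps_iff.1 hyrep).2 t
      simpa [hxdef] using this
  
lemma left_inv {σ : Equiv.Perm (Fin m)} (hc : Compat hmn σ f) :
    permOf hmn f ((cycleReps Fin.val ⇑σ).image (Fin.castLE hmn)) = σ := by
  have hS' := compat_S_subset hmn hc
  have hf := compat_hf hmn hc
  refine Equiv.ext fun i => ?_
  rw [permOf_coe hmn hS' hf]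
  by_cases hi : σ i = i
  · rw [permFun_not_movp, hi]
    rintro ⟨y, hy, t, ht⟩
    obtain ⟨r, hr, rfl⟩ := Finset.mem_image.1 hy
    rw [compat_iterate hmn hc (rep_not_fixed hr) t] at ht
    have : (⇑σ)^[t] r = i := Fin.castLE_injective hmn ht
    apply supp_iter (rep_not_fixed hr) t
    rw [this, hi]
  · obtain ⟨r, hr, ⟨t, ht⟩, s, hs⟩ :=
      exists_rep (enc := Fin.val) (perm_periodic σ i) (two_le_minPer hi)
    have hmov : movp (extFun hmn f) ((cycleReps Fin.val ⇑σ).image (Fin.castLE hmn))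
        (Fin.castLE hmn i) := by
      refine ⟨Fin.castLE hmn r, Finset.mem_image.2 ⟨r, hr, rfl⟩, s, ?_⟩
      rw [compat_iterate hmn hc (rep_not_fixed hr) s, hs]
    apply Fin.castLE_injective hmn
    rw [permFun_movp hmn hS' hmov]
    exact (hc i).2 hi

end Inv


section Steps
open Finset Function
variable {n m : ℕ} (hmn : m ≤ n)
variable {H : Type*} [Ring H] {K : Type*} [CommRing K]

lemma stepA1 (σ : Equiv.Perm (Fin m)) (a : Fin n → Fin n → K) :
    ∏ x ∈ cycleReps Fin.val ⇑σ, ∏ t ∈ Finset.range (minimalPeriod ⇑σ x),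
        a (Fin.castLE hmn ((⇑σ)^[t] x)) (Fin.castLE hmn ((⇑σ)^[t + 1] x)) =
      ∏ i ∈ Finset.univ.filter (fun i => ¬ σ i = i),
        a (Fin.castLE hmn i) (Fin.castLE hmn (σ i)) := by
  rw [prod_supp Fin.val_injective σ (fun i => a (Fin.castLE hmn i) (Fin.castLE hmn (σ i)))]
  refine Finset.prod_congr rfl fun x hx => Finset.prod_congr rfl fun t ht => ?_
  rw [Function.iterate_succ_apply']

lemma stepB (σ : Equiv.Perm (Fin m)) (a : Fin n → Fin n → K) :
    (∏ i ∈ Finset.univ.filter (fun i => σ i = i),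
        ∑ j ∈ Finset.univ.filter (fun j => j ≠ Fin.castLE hmn i), a (Fin.castLE hmn i) j) *
      ∏ i ∈ Finset.univ.filter (fun i => ¬ σ i = i),
        a (Fin.castLE hmn i) (Fin.castLE hmn (σ i)) =
    ∑ f ∈ @Finset.filter _ (fun f => Compat hmn σ f) (Classical.decPred _) Finset.univ,
      ∏ i, a (Fin.castLE hmn i) (f i) := by
  classical
  set T : Fin m → Finset (Fin n) := fun i => if σ i = i
    then Finset.univ.filter (fun j => j ≠ Fin.castLE hmn i)
    else {Fin.castLE hmn (σ i)} with hT
  have h1 : ∏ i, ∑ j ∈ T i, a (Fin.castLE hmn i) j =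
      (∏ i ∈ Finset.univ.filter (fun i => σ i = i),
        ∑ j ∈ Finset.univ.filter (fun j => j ≠ Fin.castLE hmn i), a (Fin.castLE hmn i) j) *
      ∏ i ∈ Finset.univ.filter (fun i => ¬ σ i = i),
        a (Fin.castLE hmn i) (Fin.castLE hmn (σ i)) := by
    rw [← Finset.prod_filter_mul_prod_filter_not Finset.univ (fun i => σ i = i)]
    congr 1
    · refine Finset.prod_congr rfl fun i hi => ?_
      rw [hT]; simp only
      rw [if_pos (Finset.mem_filter.1 hi).2]
    · refine Finset.prod_congr rfl fun i hi => ?_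
      rw [hT]; simp only
      rw [if_neg (Finset.mem_filter.1 hi).2, Finset.sum_singleton]
  rw [← h1, Finset.prod_univ_sum]
  apply Finset.sum_congr
  · ext p
    rw [Fintype.mem_piFinset, Finset.mem_filter]
    constructor
    · intro hp
      refine ⟨Finset.mem_univ _, fun i => ⟨fun hfix => ?_, fun hmov => ?_⟩⟩
      · have hpi := hp i; rw [hT] at hpi; simp only [if_pos hfix] at hpi
        exact (Finset.mem_filter.1 hpi).2
      · have hpi := hp i; rw [hT] at hpi; simp only [if_neg hmov] at hpi
        exact Finset.mem_singleton.1 hpi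
    · rintro ⟨-, hc⟩ i
      rw [hT]
      by_cases hfix : σ i = i
      · simp only [if_pos hfix]
        exact Finset.mem_filter.2 ⟨Finset.mem_univ _, (hc i).1 hfix⟩
      · simp only [if_neg hfix]
        exact Finset.mem_singleton.2 ((hc i).2 hfix)
  · intros; rfl

lemma stepC (τ : H →+ K) (h : Fin n → Fin n → H) (f : Fin m → Fin n)
    (hf : ∀ i, f i ≠ Fin.castLE hmn i) :
    ∑ σ ∈ @Finset.filter _ (fun σ => Compat hmn σ f) (Classical.decPred _) Finset.univ,
      ((Equiv.Perm.sign σ : ℤ) : K) *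
        ∏ x ∈ cycleReps Fin.val ⇑σ,
          ((-1 : K) ^ minimalPeriod ⇑σ x *
            τ (pathProd (fun x y => h (Fin.castLE hmn x) (Fin.castLE hmn y)) ⇑σ x
                (minimalPeriod ⇑σ x))) =
    ∏ x ∈ cycleReps Fin.val (extFun hmn f),
      (1 - τ (pathProd h (extFun hmn f) x (minimalPeriod (extFun hmn f) x))) := by
  classical
  have hrw : ∀ x ∈ cycleReps Fin.val (extFun hmn f),
      (1 : K) - τ (pathProd h (extFun hmn f) x (minimalPeriod (extFun hmn f) x))
      = (-(τ (pathProd h (extFun hmn f) x (minimalPeriod (extFun hmn f) x)))) + 1 :=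
    fun x _ => by ring
  rw [Finset.prod_congr rfl hrw, Finset.prod_add]
  simp only [Finset.prod_const_one, mul_one]
  refine Finset.sum_nbij' (fun σ => (cycleReps Fin.val ⇑σ).image (Fin.castLE hmn))
    (fun S => permOf hmn f S) ?_ ?_ ?_ ?_ ?_
  · intro σ hσ
    exact Finset.mem_powerset.2 (compat_S_subset hmn ((Finset.mem_filter.1 hσ).2))
  · intro S hS
    exact Finset.mem_filter.2 ⟨Finset.mem_univ _,
      permOf_compat hmn (Finset.mem_powerset.1 hS) hf⟩
  · intro σ hσ
    exact left_inv hmn ((Finset.mem_filter.1 hσ).2)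
  · intro S hS
    exact right_inv hmn (Finset.mem_powerset.1 hS) hf
  · intro σ hσ
    have hc : Compat hmn σ f := (Finset.mem_filter.1 hσ).2
    have hterm : ∀ x ∈ cycleReps Fin.val ⇑σ,
        -(τ (pathProd h (extFun hmn f) (Fin.castLE hmn x)
            (minimalPeriod (extFun hmn f) (Fin.castLE hmn x))))
        = (-1 : K) * τ (pathProd (fun x y => h (Fin.castLE hmn x) (Fin.castLE hmn y)) ⇑σ x
            (minimalPeriod ⇑σ x)) := by
      intro x hx
      rw [compat_minPer hmn hc (rep_not_fixed hx),
        compat_pathProd hmn h hc (rep_not_fixed hx)]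
      ring
    set R := (cycleReps Fin.val ⇑σ).card with hR
    set Sp := ∑ r ∈ cycleReps Fin.val ⇑σ, minimalPeriod ⇑σ r with hSp
    set T := ∏ x ∈ cycleReps Fin.val ⇑σ,
      τ (pathProd (fun x y => h (Fin.castLE hmn x) (Fin.castLE hmn y)) ⇑σ x
        (minimalPeriod ⇑σ x)) with hT
    have hRHS : (∏ x ∈ (cycleReps Fin.val ⇑σ).image (Fin.castLE hmn),
        -(τ (pathProd h (extFun hmn f) x (minimalPeriod (extFun hmn f) x))))
        = (-1 : K) ^ R * T := by
      rw [Finset.prod_image (fun x _ y _ hxy => Fin.castLE_injective hmn hxy),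
        Finset.prod_congr rfl hterm, Finset.prod_mul_distrib, Finset.prod_const, hT]
    have hLHS : ((Equiv.Perm.sign σ : ℤ) : K) *
        ∏ x ∈ cycleReps Fin.val ⇑σ,
          ((-1 : K) ^ minimalPeriod ⇑σ x *
            τ (pathProd (fun x y => h (Fin.castLE hmn x) (Fin.castLE hmn y)) ⇑σ x
                (minimalPeriod ⇑σ x)))
        = (-1 : K) ^ (Sp + R) * ((-1 : K) ^ Sp * T) := by
      rw [sign_cast Fin.val_injective σ, card_supp Fin.val_injective σ,
        Finset.prod_mul_distrib, Finset.prod_pow_eq_pow_sum, ← hSp, ← hR, ← hT]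
    rw [hLHS, hRHS]
    have h1 : ((-1 : K) ^ Sp) * ((-1 : K) ^ Sp) = 1 := by
      rw [← pow_add, ← two_mul, pow_mul, neg_one_sq, one_pow]
    calc (-1 : K) ^ (Sp + R) * ((-1 : K) ^ Sp * T)
        = ((-1 : K) ^ Sp * (-1 : K) ^ Sp) * ((-1 : K) ^ R * T) := by rw [pow_add]; ring
      _ = (-1 : K) ^ R * T := by rw [h1, one_mul]

end Steps


theorem stmt0 {H K : Type*} [Ring H] [CommRing K]
    (n m : ℕ) (hn : 2 ≤ n) (hm : 1 ≤ m) (hmn : m ≤ n)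
    (τ : H →+ K) (hτ : ∀ r r' : H, τ (r * r') = τ (r' * r))
    (a : Fin n → Fin n → K) (h : Fin n → Fin n → H) :
    detExp (⇑τ) (Fin.val : Fin m → ℕ)
      (fun i => ∑ j ∈ Finset.univ.filter fun j => j ≠ Fin.castLE hmn i,
        a (Fin.castLE hmn i) j)
      (fun x y => a (Fin.castLE hmn x) (Fin.castLE hmn y))
      (fun x y => h (Fin.castLE hmn x) (Fin.castLE hmn y)) =
    ∑ f : {f : Fin m → Fin n // ∀ i, f i ≠ Fin.castLE hmn i},
      (∏ i : Fin m, a (Fin.castLE hmn i) (f.1 i)) *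
        ∏ x ∈ cycleReps Fin.val (extFun hmn f.1),
          (1 - τ (pathProd h (extFun hmn f.1) x (minimalPeriod (extFun hmn f.1) x))) := by
  classical
  have key : ∀ σ : Equiv.Perm (Fin m),
      ((Equiv.Perm.sign σ : ℤ) : K) *
        (∏ x ∈ Finset.univ.filter (fun x => σ x = x),
          ∑ j ∈ Finset.univ.filter (fun j => j ≠ Fin.castLE hmn x), a (Fin.castLE hmn x) j) *
        ∏ x ∈ cycleReps Fin.val ⇑σ,
          ((-1 : K) ^ minimalPeriod ⇑σ x *
            (∏ t ∈ Finset.range (minimalPeriod ⇑σ x),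
              a (Fin.castLE hmn ((⇑σ)^[t] x)) (Fin.castLE hmn ((⇑σ)^[t + 1] x))) *
            τ (pathProd (fun x y => h (Fin.castLE hmn x) (Fin.castLE hmn y)) ⇑σ x
              (minimalPeriod ⇑σ x))) =
      ∑ f ∈ @Finset.filter _ (fun f => Compat hmn σ f) (Classical.decPred _) Finset.univ,
        (((Equiv.Perm.sign σ : ℤ) : K) *
          ∏ x ∈ cycleReps Fin.val ⇑σ,
            ((-1 : K) ^ minimalPeriod ⇑σ x *
              τ (pathProd (fun x y => h (Fin.castLE hmn x) (Fin.castLE hmn y)) ⇑σ x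
                (minimalPeriod ⇑σ x)))) *
          ∏ i, a (Fin.castLE hmn i) (f i) := by
    intro σ
    have e1 : ∏ x ∈ cycleReps Fin.val ⇑σ,
        ((-1 : K) ^ minimalPeriod ⇑σ x *
          (∏ t ∈ Finset.range (minimalPeriod ⇑σ x),
            a (Fin.castLE hmn ((⇑σ)^[t] x)) (Fin.castLE hmn ((⇑σ)^[t + 1] x))) *
          τ (pathProd (fun x y => h (Fin.castLE hmn x) (Fin.castLE hmn y)) ⇑σ x
            (minimalPeriod ⇑σ x))) =
        (∏ x ∈ cycleReps Fin.val ⇑σ,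
          ((-1 : K) ^ minimalPeriod ⇑σ x *
            τ (pathProd (fun x y => h (Fin.castLE hmn x) (Fin.castLE hmn y)) ⇑σ x
              (minimalPeriod ⇑σ x)))) *
        ∏ x ∈ cycleReps Fin.val ⇑σ, ∏ t ∈ Finset.range (minimalPeriod ⇑σ x),
          a (Fin.castLE hmn ((⇑σ)^[t] x)) (Fin.castLE hmn ((⇑σ)^[t + 1] x)) := by
      rw [← Finset.prod_mul_distrib]
      exact Finset.prod_congr rfl fun x _ => by ring
    rw [e1, stepA1 hmn σ a]
    have habc : ∀ (s p q r : K) (Φ : Finset (Fin m → Fin n)) (F : (Fin m → Fin n) → K),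
        p * r = ∑ f ∈ Φ, F f → s * p * (q * r) = ∑ f ∈ Φ, s * q * F f := by
      intro s p q r Φ F hpr
      calc s * p * (q * r) = (s * q) * (p * r) := by ring
        _ = (s * q) * ∑ f ∈ Φ, F f := by rw [hpr]
        _ = ∑ f ∈ Φ, s * q * F f := by rw [Finset.mul_sum]
    exact habc _ _ _ _ _ _ (stepB hmn σ a)
  have hpull : ∀ f : Fin m → Fin n,
      (∑ σ ∈ @Finset.filter _ (fun σ => Compat hmn σ f) (Classical.decPred _) Finset.univ,
        (((Equiv.Perm.sign σ : ℤ) : K) *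
          ∏ x ∈ cycleReps Fin.val ⇑σ,
            ((-1 : K) ^ minimalPeriod ⇑σ x *
              τ (pathProd (fun x y => h (Fin.castLE hmn x) (Fin.castLE hmn y)) ⇑σ x
                (minimalPeriod ⇑σ x)))) * ∏ i, a (Fin.castLE hmn i) (f i))
      = (∏ i, a (Fin.castLE hmn i) (f i)) *
        ∑ σ ∈ @Finset.filter _ (fun σ => Compat hmn σ f) (Classical.decPred _) Finset.univ,
          ((Equiv.Perm.sign σ : ℤ) : K) *
            ∏ x ∈ cycleReps Fin.val ⇑σ,
              ((-1 : K) ^ minimalPeriod ⇑σ x *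
                τ (pathProd (fun x y => h (Fin.castLE hmn x) (Fin.castLE hmn y)) ⇑σ x
                  (minimalPeriod ⇑σ x))) := by
    intro f
    rw [Finset.mul_sum]
    exact Finset.sum_congr rfl fun σ _ => by ring
  have hvan : ∀ f : Fin m → Fin n, ¬(∀ i, f i ≠ Fin.castLE hmn i) →
      (∏ i, a (Fin.castLE hmn i) (f i)) *
        (∑ σ ∈ @Finset.filter _ (fun σ => Compat hmn σ f) (Classical.decPred _) Finset.univ,
          ((Equiv.Perm.sign σ : ℤ) : K) *
            ∏ x ∈ cycleReps Fin.val ⇑σ,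
              ((-1 : K) ^ minimalPeriod ⇑σ x *
                τ (pathProd (fun x y => h (Fin.castLE hmn x) (Fin.castLE hmn y)) ⇑σ x
                  (minimalPeriod ⇑σ x)))) = 0 := by
    intro f hP
    have hempty : (@Finset.filter _ (fun σ => Compat hmn σ f) (Classical.decPred _)
        Finset.univ) = ∅ :=
      Finset.filter_eq_empty_iff.2 fun {σ} _ hc => hP (compat_hf hmn hc)
    rw [hempty]
    simp
  refine ((Finset.sum_congr rfl fun σ _ => key σ).trans ?_)
  refine (Finset.sum_comm'
    (s' := fun f => @Finset.filter _ (fun σ => Compat hmn σ f) (Classical.decPred _) Finset.univ)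
    (t' := (Finset.univ : Finset (Fin m → Fin n)))
    (fun σ f => by simp [Finset.mem_filter])).trans ?_
  refine (Finset.sum_congr rfl fun f _ => hpull f).trans ?_
  refine ((Finset.sum_subset
    (Finset.filter_subset (fun f : Fin m → Fin n => ∀ i, f i ≠ Fin.castLE hmn i) Finset.univ)
    (fun f _ hf => hvan f (by simpa using hf))).symm).trans ?_
  refine Eq.trans (Finset.sum_congr (by ext f; simp) fun f hf => ?_)
    (Finset.sum_subtype
      (Finset.univ.filter (fun f : Fin m → Fin n => ∀ i, f i ≠ Fin.castLE hmn i))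
      (fun f => by simp)
      (fun f => (∏ i, a (Fin.castLE hmn i) (f i)) *
        ∏ x ∈ cycleReps Fin.val (extFun hmn f),
          (1 - τ (pathProd h (extFun hmn f) x (minimalPeriod (extFun hmn f) x)))))
  have hP : ∀ i, f i ≠ Fin.castLE hmn i := (Finset.mem_filter.1 hf).2
  rw [stepC hmn τ h f hP]
end

section
/- Fix N ≥ 1 and attach to each edge (i,j) ∈ E a matrix h_{ij} ∈ M_N(ℂ) such that h_{ji} h_{ij} = I_N for every edge. Work in the polynomial ring ℂ[x_e : e an unordered pair {i,j}, i ≠ j], and let Δ be the Nn×Nn matrix over this ring indexed by V×{1,…,N} with Δ_{(i,k),(j,l)} = −(h_{ij})_{kl} x_{{i,j}} for i ≠ j and Δ_{(i,k),(i,l)} = δ_{kl} Σ_{j ≠ i} x_{{i,j}}. Then in the ordinary determinant det Δ_[Nm] of the principal submatrix indexed by U×{1,…,N}, every monomial in which some variable x_e appears with degree strictly greater than N has coefficient zero. -/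
open Finset Matrix

theorem det_mul_expand {s t R : Type*} [Fintype s] [DecidableEq s] [Fintype t] [DecidableEq t]
    [CommRing R] (A : Matrix s t R) (B : Matrix t s R) :
    (A * B).det = ∑ f : s → t, (A.submatrix id f).det * ∏ i, B (f i) i := by
  calc (A * B).det = ∑ f : s → t, ∑ σ : Equiv.Perm s, Equiv.Perm.sign σ •
        ∏ i, A (σ i) (f i) * B (f i) i := by
        simp only [det_apply]
        simp_rw [Matrix.mul_apply, prod_univ_sum, Fintype.piFinset_univ, smul_sum]
        rw [Finset.sum_comm]
    _ = _ := by
        refine sum_congr rfl fun f _ => ?_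
        rw [det_apply, sum_mul]
        refine sum_congr rfl fun σ _ => ?_
        rw [prod_mul_distrib, smul_mul_assoc]
        rfl

theorem prod_X_monomial {σ R ι : Type*} [CommSemiring R] [DecidableEq σ] (s : Finset ι)
    (g : ι → σ) :
    (∏ i ∈ s, MvPolynomial.X (R := R) (g i)) =
      MvPolynomial.monomial (∑ i ∈ s, Finsupp.single (g i) 1) 1 := by
  classical
  induction s using Finset.cons_induction with
  | empty => simp
  | cons a s ha ih =>
      rw [prod_cons, sum_cons, ih, MvPolynomial.X, MvPolynomial.monomial_mul, one_mul]


theorem sum_uw {n N : ℕ} (h : Fin n → Fin n → Matrix (Fin N) (Fin N) ℂ)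
    (hinv : ∀ i j : Fin n, i ≠ j → h j i * h i j = 1)
    (i j cp cr : Fin n) (k t : Fin N) (hne : i ≠ j) :
    (∑ l : Fin N,
        (if cp = i then (if k = l then (1:ℂ) else 0)
         else if cp = j then -(h j i k l) else 0) *
        (if cr = i then (if l = t then (1:ℂ) else 0)
         else if cr = j then -(h i j l t) else 0))
    = if cp = cr then (if (cp = i ∨ cp = j) ∧ k = t then 1 else 0)
      else (if (cp = i ∧ cr = j) ∨ (cp = j ∧ cr = i) then -(h cp cr k t) else 0) := by
  have Sd : ∀ g : Fin N → ℂ, (∑ l : Fin N, (if k = l then (1:ℂ) else 0) * g l) = g k := by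
    intro g; simp [ite_mul, Finset.sum_ite_eq]
  have Sd' : ∀ g : Fin N → ℂ, (∑ l : Fin N, g l * (if l = t then (1:ℂ) else 0)) = g t := by
    intro g; simp [mul_ite, Finset.sum_ite_eq']
  by_cases h1 : cp = i <;> by_cases h2 : cp = j <;>
    by_cases h3 : cr = i <;> by_cases h4 : cr = j
  · exact absurd (h1.symm.trans h2) hne
  · exact absurd (h1.symm.trans h2) hne
  · exact absurd (h1.symm.trans h2) hne
  · exact absurd (h1.symm.trans h2) hne
  · exact absurd (h3.symm.trans h4) hne
  · -- cp = i = cr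
    have hcc : cp = cr := h1.trans h3.symm
    simp only [if_pos h1, if_pos h3, if_pos hcc]
    rw [Sd fun l => (if l = t then (1:ℂ) else 0)]
    simp [h1]
  · -- cp = i, cr = j
    have hcc : cp ≠ cr := fun hE => h3 (hE ▸ h1)
    simp only [if_pos h1, if_neg h3, if_pos h4, if_neg hcc]
    rw [Sd fun l => -(h i j l t), h1, h4]
    simp
  · -- cp = i, cr ∉ {i,j}
    have hcc : cp ≠ cr := fun hE => h3 (hE ▸ h1)
    simp only [if_pos h1, if_neg h3, if_neg h4, if_neg hcc,
      if_neg (show ¬((cp = i ∧ cr = j) ∨ (cp = j ∧ cr = i)) by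
        rintro (⟨-, hE⟩ | ⟨hE, -⟩); exacts [h4 hE, h2 hE])]
    simp
  · exact absurd (h3.symm.trans h4) hne
  · -- cp = j, cr = i
    have hcc : cp ≠ cr := fun hE => h1 (hE ▸ h3)
    simp only [if_neg h1, if_pos h2, if_pos h3, if_neg hcc]
    rw [Sd' fun l => -(h j i k l), h2, h3]
    simp
  · -- cp = j = cr
    have hcc : cp = cr := h2.trans h4.symm
    simp only [if_neg h1, if_pos h2, if_neg h3, if_pos h4, if_pos hcc]
    have hS : (∑ l : Fin N, -(h j i k l) * -(h i j l t)) = (h j i * h i j) k t := by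
      rw [Matrix.mul_apply]
      exact Finset.sum_congr rfl fun l _ => neg_mul_neg _ _
    rw [hS, hinv i j hne, Matrix.one_apply]
    simp [h2]
  · -- cp = j, cr ∉ {i,j}
    have hcc : cp ≠ cr := fun hE => h4 (hE ▸ h2)
    simp only [if_neg h1, if_pos h2, if_neg h3, if_neg h4, if_neg hcc,
      if_neg (show ¬((cp = i ∧ cr = j) ∨ (cp = j ∧ cr = i)) by
        rintro (⟨hE, -⟩ | ⟨-, hE⟩); exacts [h1 hE, h3 hE])]
    simp
  · exact absurd (h3.symm.trans h4) hne
  all_goals {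
    have hor : ¬((cp = i ∧ cr = j) ∨ (cp = j ∧ cr = i)) := by
      rintro (⟨hE, -⟩ | ⟨hE, -⟩); exacts [h1 hE, h2 hE]
    have hor2 : ¬((cp = i ∨ cp = j) ∧ k = t) := by
      rintro ⟨hE | hE, -⟩; exacts [h1 hE, h2 hE]
    by_cases hcc : cp = cr
    · simp only [if_neg h1, if_neg h2, if_pos hcc, if_neg hor2]
      simp
    · simp only [if_neg h1, if_neg h2, if_neg hcc, if_neg hor]
      simp }

theorem sum_edges_diag {n : ℕ} (c : Fin n) :
    (∑ i : Fin n, ∑ j : Fin n,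
        if i < j ∧ (c = i ∨ c = j) then MvPolynomial.X (R := ℂ) (Sym2.mk i j) else 0)
    = ∑ j ∈ Finset.univ.filter (fun j => j ≠ c), MvPolynomial.X (Sym2.mk c j) := by
  have hsplit : ∀ i j : Fin n,
      (if i < j ∧ (c = i ∨ c = j) then MvPolynomial.X (R := ℂ) (Sym2.mk i j) else 0)
      = (if i = c then (if c < j then MvPolynomial.X (R := ℂ) (Sym2.mk c j) else 0) else 0)
        + (if j = c then (if i < c then MvPolynomial.X (R := ℂ) (Sym2.mk c i) else 0)
            else 0) := by
    intro i j
    by_cases hic : i = c <;> by_cases hjc : j = c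
    · have hij : ¬ (i < j) := by rw [hic, hjc]; exact lt_irrefl c
      have h1 : ¬(i < j ∧ (c = i ∨ c = j)) := fun hE => hij hE.1
      have h2 : ¬ (c < j) := by rw [hjc]; exact lt_irrefl c
      have h3 : ¬ (i < c) := by rw [hic]; exact lt_irrefl c
      rw [if_neg h1, if_pos hic, if_pos hjc, if_neg h2, if_neg h3]
      simp
    · by_cases hij : c < j
      · have h1 : i < j ∧ (c = i ∨ c = j) := ⟨hic ▸ hij, Or.inl hic.symm⟩
        rw [if_pos h1, if_pos hic, if_pos hij, if_neg hjc, hic]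
        simp
      · have h1 : ¬(i < j ∧ (c = i ∨ c = j)) := fun hE => hij (hic ▸ hE.1)
        rw [if_neg h1, if_pos hic, if_neg hij, if_neg hjc]
        simp
    · by_cases hij : i < c
      · have h1 : i < j ∧ (c = i ∨ c = j) := ⟨hjc ▸ hij, Or.inr hjc.symm⟩
        rw [if_pos h1, if_neg hic, if_pos hjc, if_pos hij, hjc]
        rw [show (Sym2.mk i c) = Sym2.mk c i from Sym2.eq_swap]
        simp
      · have h1 : ¬(i < j ∧ (c = i ∨ c = j)) := fun hE => hij (hjc ▸ hE.1)
        rw [if_neg h1, if_neg hic, if_pos hjc, if_neg hij]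
        simp
    · have h1 : ¬(i < j ∧ (c = i ∨ c = j)) := by
        rintro ⟨-, hE | hE⟩; exacts [hic hE.symm, hjc hE.symm]
      rw [if_neg h1, if_neg hic, if_neg hjc]
      simp
  simp_rw [hsplit]
  rw [Finset.sum_congr rfl fun i _ => Finset.sum_add_distrib, Finset.sum_add_distrib]
  have hpush : ∀ (A : Fin n → MvPolynomial (Sym2 (Fin n)) ℂ) (i : Fin n),
      (∑ j : Fin n, if i = c then A j else 0) = if i = c then ∑ j : Fin n, A j else 0 := by
    intro A i; split_ifs <;> simp
  rw [Finset.sum_congr rfl fun i _ => hpush (fun j =>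
    if c < j then MvPolynomial.X (R := ℂ) (Sym2.mk c j) else 0) i]
  rw [Finset.sum_ite_eq' Finset.univ c, if_pos (Finset.mem_univ c)]
  have hinner : ∀ i : Fin n, (∑ j : Fin n, if j = c then
      (if i < c then MvPolynomial.X (R := ℂ) (Sym2.mk c i) else 0) else 0)
      = if i < c then MvPolynomial.X (R := ℂ) (Sym2.mk c i) else 0 := by
    intro i
    rw [Finset.sum_ite_eq' Finset.univ c, if_pos (Finset.mem_univ c)]
  rw [Finset.sum_congr rfl fun i _ => hinner i]
  rw [Finset.sum_filter, ← Finset.sum_add_distrib]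
  refine Finset.sum_congr rfl fun j _ => ?_
  rcases lt_trichotomy c j with hlt | heq | hgt
  · simp [hlt, not_lt.mpr hlt.le, hlt.ne']
  · simp [heq, lt_irrefl]
  · simp [hgt, not_lt.mpr hgt.le, hgt.ne]

theorem sum_edges_off {n : ℕ} (cp cr : Fin n) (hne : cp ≠ cr) (z : ℂ) :
    (∑ i : Fin n, ∑ j : Fin n, if i < j then
        MvPolynomial.C (if (cp = i ∧ cr = j) ∨ (cp = j ∧ cr = i) then z else 0) *
          MvPolynomial.X (Sym2.mk i j) else 0)
    = MvPolynomial.C z * MvPolynomial.X (Sym2.mk cp cr) := by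
  rcases lt_or_gt_of_ne hne with hlt | hgt
  · rw [Finset.sum_eq_single cp]
    · rw [Finset.sum_eq_single cr]
      · rw [if_pos hlt, if_pos (Or.inl ⟨rfl, rfl⟩)]
      · intro j _ hj
        have hcond : ¬((cp = cp ∧ cr = j) ∨ (cp = j ∧ cr = cp)) := by
          rintro (⟨-, hE⟩ | ⟨-, hE⟩); exacts [hj hE.symm, hne hE.symm]
        by_cases hpj : cp < j
        · rw [if_pos hpj, if_neg hcond]; simp
        · rw [if_neg hpj]
      · simp
    · intro i _ hi
      refine Finset.sum_eq_zero fun j _ => ?_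
      by_cases hij : i < j
      · have hcond : ¬((cp = i ∧ cr = j) ∨ (cp = j ∧ cr = i)) := by
          rintro (⟨hE, -⟩ | ⟨hE, hF⟩)
          · exact hi hE.symm
          · rw [← hE, ← hF] at hij; exact absurd hlt hij.asymm
        rw [if_pos hij, if_neg hcond]; simp
      · rw [if_neg hij]
    · simp
  · rw [Finset.sum_eq_single cr]
    · rw [Finset.sum_eq_single cp]
      · rw [if_pos hgt, if_pos (Or.inr ⟨rfl, rfl⟩),
          show (Sym2.mk cr cp) = Sym2.mk cp cr from Sym2.eq_swap]
      · intro j _ hj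
        have hcond : ¬((cp = cr ∧ cr = j) ∨ (cp = j ∧ cr = cr)) := by
          rintro (⟨hE, -⟩ | ⟨hE, -⟩); exacts [hne hE, hj hE.symm]
        by_cases hpj : cr < j
        · rw [if_pos hpj, if_neg hcond]; simp
        · rw [if_neg hpj]
      · simp
    · intro i _ hi
      refine Finset.sum_eq_zero fun j _ => ?_
      by_cases hij : i < j
      · have hcond : ¬((cp = i ∧ cr = j) ∨ (cp = j ∧ cr = i)) := by
          rintro (⟨hE, hF⟩ | ⟨-, hE⟩)
          · rw [← hE, ← hF] at hij; exact absurd hij hgt.asymm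
          · exact hi hE.symm
        rw [if_pos hij, if_neg hcond]; simp
      · rw [if_neg hij]
    · simp


open Finset

theorem stmt12 (n m N : ℕ) (hn : 2 ≤ n) (hm : 1 ≤ m) (hmn : m ≤ n) (hN : 1 ≤ N)
    (h : Fin n → Fin n → Matrix (Fin N) (Fin N) ℂ)
    (hinv : ∀ i j : Fin n, i ≠ j → h j i * h i j = 1) :
    ∀ dm : Sym2 (Fin n) →₀ ℕ,
      (∃ e : Sym2 (Fin n), ¬ e.IsDiag ∧ N < dm e) →
      MvPolynomial.coeff dm
        (Matrix.det
          ((Matrix.of fun p q : Fin n × Fin N =>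
              if p.1 = q.1 then
                (if p.2 = q.2 then
                  ∑ j ∈ Finset.univ.filter fun j => j ≠ p.1,
                    MvPolynomial.X (R := ℂ) (Sym2.mk p.1 j)
                else 0)
              else
                - (MvPolynomial.C (h p.1 q.1 p.2 q.2) *
                    MvPolynomial.X (Sym2.mk p.1 q.1))).submatrix
            (fun p : Fin m × Fin N => ((Fin.castLE hmn p.1, p.2) : Fin n × Fin N))
            (fun p : Fin m × Fin N => ((Fin.castLE hmn p.1, p.2) : Fin n × Fin N)))) = 0 := by
  rintro dm ⟨e, hed, hNe⟩
  classical
  set uent : (Fin m × Fin N) → ((Fin n × Fin n) × Fin N) → ℂ := fun p q =>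
    if q.1.1 < q.1.2 then
      (if Fin.castLE hmn p.1 = q.1.1 then (if p.2 = q.2 then 1 else 0)
       else if Fin.castLE hmn p.1 = q.1.2 then -(h q.1.2 q.1.1 p.2 q.2) else 0)
    else 0 with huent
  set went : ((Fin n × Fin n) × Fin N) → (Fin m × Fin N) → ℂ := fun q r =>
    if q.1.1 < q.1.2 then
      (if Fin.castLE hmn r.1 = q.1.1 then (if q.2 = r.2 then 1 else 0)
       else if Fin.castLE hmn r.1 = q.1.2 then -(h q.1.1 q.1.2 q.2 r.2) else 0)
    else 0 with hwent
  set BM : Matrix (Fin m × Fin N) ((Fin n × Fin n) × Fin N) (MvPolynomial (Sym2 (Fin n)) ℂ) :=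
    Matrix.of fun p q => MvPolynomial.C (uent p q) * MvPolynomial.X (Sym2.mk q.1.1 q.1.2) with hBM
  set CM : Matrix ((Fin n × Fin n) × Fin N) (Fin m × Fin N) (MvPolynomial (Sym2 (Fin n)) ℂ) :=
    Matrix.of fun q r => MvPolynomial.C (went q r) with hCM
  have hfact :
      ((Matrix.of fun p q : Fin n × Fin N =>
              if p.1 = q.1 then
                (if p.2 = q.2 then
                  ∑ j ∈ Finset.univ.filter fun j => j ≠ p.1,
                    MvPolynomial.X (R := ℂ) (Sym2.mk p.1 j)
                else 0)
              else
                - (MvPolynomial.C (h p.1 q.1 p.2 q.2) *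
                    MvPolynomial.X (Sym2.mk p.1 q.1))).submatrix
            (fun p : Fin m × Fin N => ((Fin.castLE hmn p.1, p.2) : Fin n × Fin N))
            (fun p : Fin m × Fin N => ((Fin.castLE hmn p.1, p.2) : Fin n × Fin N)))
        = BM * CM := by
    refine Matrix.ext fun p r => ?_
    have hin : ∀ ij : Fin n × Fin n,
        (∑ l : Fin N, BM p (ij, l) * CM (ij, l) r) =
        (if ij.1 < ij.2 then
          MvPolynomial.C (
            if (Fin.castLE hmn p.1 : Fin n) = Fin.castLE hmn r.1 then
              (if ((Fin.castLE hmn p.1 : Fin n) = ij.1 ∨ (Fin.castLE hmn p.1 : Fin n) = ij.2)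
                  ∧ p.2 = r.2 then (1:ℂ) else 0)
            else
              (if ((Fin.castLE hmn p.1 : Fin n) = ij.1 ∧ (Fin.castLE hmn r.1 : Fin n) = ij.2) ∨
                  ((Fin.castLE hmn p.1 : Fin n) = ij.2 ∧ (Fin.castLE hmn r.1 : Fin n) = ij.1) then
                -(h (Fin.castLE hmn p.1) (Fin.castLE hmn r.1) p.2 r.2) else 0))
            * MvPolynomial.X (Sym2.mk ij.1 ij.2)
        else 0) := by
      intro ij
      by_cases hij : ij.1 < ij.2
      · rw [if_pos hij]
        have hcomb : ∀ l : Fin N, BM p (ij, l) * CM (ij, l) r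
            = MvPolynomial.C (uent p (ij, l) * went ((ij, l)) r) *
                MvPolynomial.X (Sym2.mk ij.1 ij.2) := by
          intro l
          simp only [hBM, hCM, Matrix.of_apply]
          rw [mul_right_comm, ← MvPolynomial.C_mul]
        rw [Finset.sum_congr rfl fun l _ => hcomb l, ← Finset.sum_mul, ← map_sum]
        congr 2
        simp only [huent, hwent]
        simp only [hij, if_true]
        exact sum_uw h hinv ij.1 ij.2 (Fin.castLE hmn p.1) (Fin.castLE hmn r.1) p.2 r.2
          (ne_of_lt hij)
      · rw [if_neg hij]
        refine Finset.sum_eq_zero fun l _ => ?_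
        simp [hBM, hCM, huent, hij]
    rw [Matrix.mul_apply, Fintype.sum_prod_type,
      Finset.sum_congr rfl fun ij (_ : ij ∈ Finset.univ) => hin ij, Fintype.sum_prod_type]
    simp only [Matrix.submatrix_apply, Matrix.of_apply]
    by_cases hpr : (Fin.castLE hmn p.1 : Fin n) = Fin.castLE hmn r.1
    · rw [if_pos hpr]
      by_cases hkt : p.2 = r.2
      · rw [if_pos hkt]
        have hterm : ∀ i j : Fin n,
            (if (i, j).1 < (i, j).2 then
              MvPolynomial.C (
                if (Fin.castLE hmn p.1 : Fin n) = Fin.castLE hmn r.1 then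
                  (if ((Fin.castLE hmn p.1 : Fin n) = (i, j).1 ∨
                      (Fin.castLE hmn p.1 : Fin n) = (i, j).2) ∧ p.2 = r.2 then (1:ℂ) else 0)
                else
                  (if ((Fin.castLE hmn p.1 : Fin n) = (i, j).1 ∧
                        (Fin.castLE hmn r.1 : Fin n) = (i, j).2) ∨
                      ((Fin.castLE hmn p.1 : Fin n) = (i, j).2 ∧
                        (Fin.castLE hmn r.1 : Fin n) = (i, j).1) then
                    -(h (Fin.castLE hmn p.1) (Fin.castLE hmn r.1) p.2 r.2) else 0))
                * MvPolynomial.X (Sym2.mk i j)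
            else 0)
            = (if i < j ∧ ((Fin.castLE hmn p.1 : Fin n) = i ∨ (Fin.castLE hmn p.1 : Fin n) = j)
                then MvPolynomial.X (R := ℂ) (Sym2.mk i j) else 0) := by
          intro i j
          rw [if_pos hpr]
          by_cases hij : i < j
          · by_cases hc : (Fin.castLE hmn p.1 : Fin n) = i ∨ (Fin.castLE hmn p.1 : Fin n) = j
            · rw [if_pos hij, if_pos ⟨hc, hkt⟩, if_pos ⟨hij, hc⟩, MvPolynomial.C_1, one_mul]
            · rw [if_pos hij, if_neg (fun hE => hc hE.1), if_neg (fun hE => hc hE.2),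
                map_zero, zero_mul]
          · rw [if_neg hij, if_neg (fun hE => hij hE.1)]
        rw [Finset.sum_congr rfl fun i _ => Finset.sum_congr rfl fun j _ => hterm i j]
        rw [sum_edges_diag (Fin.castLE hmn p.1)]
      · rw [if_neg hkt]
        symm
        refine Finset.sum_eq_zero fun i _ => Finset.sum_eq_zero fun j _ => ?_
        rw [if_pos hpr]
        by_cases hij : i < j
        · rw [if_pos hij, if_neg (fun hE => hkt hE.2), map_zero, zero_mul]
        · rw [if_neg hij]
    · rw [if_neg hpr]
      have hterm : ∀ i j : Fin n,
          (if (i, j).1 < (i, j).2 then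
            MvPolynomial.C (
              if (Fin.castLE hmn p.1 : Fin n) = Fin.castLE hmn r.1 then
                (if ((Fin.castLE hmn p.1 : Fin n) = (i, j).1 ∨
                    (Fin.castLE hmn p.1 : Fin n) = (i, j).2) ∧ p.2 = r.2 then (1:ℂ) else 0)
              else
                (if ((Fin.castLE hmn p.1 : Fin n) = (i, j).1 ∧
                      (Fin.castLE hmn r.1 : Fin n) = (i, j).2) ∨
                    ((Fin.castLE hmn p.1 : Fin n) = (i, j).2 ∧
                      (Fin.castLE hmn r.1 : Fin n) = (i, j).1) then
                  -(h (Fin.castLE hmn p.1) (Fin.castLE hmn r.1) p.2 r.2) else 0))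
              * MvPolynomial.X (Sym2.mk i j)
          else 0)
          = (if i < j then
              MvPolynomial.C (if ((Fin.castLE hmn p.1 : Fin n) = i ∧
                  (Fin.castLE hmn r.1 : Fin n) = j) ∨
                  ((Fin.castLE hmn p.1 : Fin n) = j ∧ (Fin.castLE hmn r.1 : Fin n) = i) then
                -(h (Fin.castLE hmn p.1) (Fin.castLE hmn r.1) p.2 r.2) else 0) *
                MvPolynomial.X (Sym2.mk i j) else 0) := by
        intro i j
        rw [if_neg hpr]
      rw [Finset.sum_congr rfl fun i _ => Finset.sum_congr rfl fun j _ => hterm i j]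
      rw [sum_edges_off (Fin.castLE hmn p.1) (Fin.castLE hmn r.1) hpr
        (-(h (Fin.castLE hmn p.1) (Fin.castLE hmn r.1) p.2 r.2)), map_neg, neg_mul]
  rw [hfact, det_mul_expand, MvPolynomial.coeff_sum]
  refine Finset.sum_eq_zero fun f _ => ?_
  by_cases hinj : Function.Injective f
  · by_cases hlt : ∀ p, (f p).1.1 < (f p).1.2
    · have hdet : (BM.submatrix id f).det =
          MvPolynomial.C ((Matrix.of fun p q => uent p (f q)).det) *
            ∏ p : Fin m × Fin N, MvPolynomial.X (R := ℂ) (Sym2.mk (f p).1.1 (f p).1.2) := by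
        have hsplit : BM.submatrix id f =
            ((Matrix.of fun p q => uent p (f q)).map MvPolynomial.C) *
              Matrix.diagonal (fun q => MvPolynomial.X (Sym2.mk (f q).1.1 (f q).1.2)) := by
          ext p q
          simp [hBM, Matrix.mul_diagonal, Matrix.map_apply]
        rw [hsplit, det_mul, det_diagonal]
        congr 1
        exact (RingHom.map_det MvPolynomial.C _).symm
      have hCMprod : (∏ i : Fin m × Fin N, CM (f i) i) =
          MvPolynomial.C (∏ i : Fin m × Fin N, went (f i) i) := by
        simp [hCM, map_prod]
      rw [hdet, prod_X_monomial, hCMprod]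
      rw [mul_right_comm, ← MvPolynomial.C_mul, MvPolynomial.coeff_C_mul,
        MvPolynomial.coeff_monomial]
      have hμ : (∑ p : Fin m × Fin N, Finsupp.single (Sym2.mk (f p).1.1 (f p).1.2) (1 : ℕ)) e ≤ N := by
        have hcard : (∑ p : Fin m × Fin N, Finsupp.single (Sym2.mk (f p).1.1 (f p).1.2) (1 : ℕ)) e
            = (univ.filter fun p : Fin m × Fin N => Sym2.mk (f p).1.1 (f p).1.2 = e).card := by
          rw [Finsupp.finset_sum_apply]
          simp only [Finsupp.single_apply]
          rw [Finset.sum_boole]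
          simp
        rw [hcard]
        have hinjOn : Set.InjOn (fun p : Fin m × Fin N => (f p).2)
            (univ.filter fun p : Fin m × Fin N => Sym2.mk (f p).1.1 (f p).1.2 = e) := by
          intro p hp p' hp' h2
          simp only [Finset.coe_filter, Set.mem_setOf_eq] at hp hp'
          have hmk : Sym2.mk (f p).1.1 (f p).1.2 = Sym2.mk (f p').1.1 (f p').1.2 := by rw [hp.2, hp'.2]
          rw [Sym2.mk_eq_mk_iff] at hmk
          have h1 : (f p).1 = (f p').1 := by
            rcases hmk with h' | h'
            · exact h'
            · exfalso
              have := hlt p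
              rw [h'] at this
              exact absurd (hlt p') (by simpa using this.asymm)
          exact hinj (Prod.ext h1 h2)
        have := Finset.card_le_card_of_injOn (fun p : Fin m × Fin N => (f p).2)
          (fun p _ => Finset.mem_univ _) hinjOn
        simpa using this
      have hne : (∑ p : Fin m × Fin N, Finsupp.single (Sym2.mk (f p).1.1 (f p).1.2) (1 : ℕ)) ≠ dm := by
        intro hEq
        rw [hEq] at hμ
        omega
      rw [if_neg hne, mul_zero]
    · push_neg at hlt
      obtain ⟨p0, hp0⟩ := hlt
      have hz : (BM.submatrix id f).det = 0 := by
        apply Matrix.det_eq_zero_of_column_eq_zero p0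
        intro i
        simp [hBM, huent, Matrix.submatrix_apply, not_lt.mpr hp0]
      rw [hz, zero_mul, MvPolynomial.coeff_zero]
  · rw [Function.not_injective_iff] at hinj
    obtain ⟨p1, p2, heq, hne⟩ := hinj
    rw [Matrix.det_zero_of_column_eq hne (fun i => by
      simp only [Matrix.submatrix_apply, id_eq, heq]), zero_mul, MvPolynomial.coeff_zero]
end
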